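/- Let x be a recurrent infinite word over a finite alphabet that is not eventually periodic, and suppose x is uniformly factor-balanced with constant C, a positive integer (i.e., every finite word is C-balanced in x). Then x is (2C+3)-power-free. -/
import Mathlib


open scoped Classical

section Core

variable {A : Type*} {B : Type*}

/-- `w` occurs at position `i` of the infinite word `x`. -/
def OccursAt (x : ℕ → A) (w : List A) (i : ℕ) : Prop :=
  w = (List.range w.length).map fun j => x (i + j)

/-- `w` is a factor of the infinite word `x`. -/
def IsFactor (x : ℕ → A) (w : List A) : Prop := ∃ i, OccursAt x w i

/-- The number of (possibly overlapping) occurrences of `w` in the finite word `u`,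
i.e. `|u|_w`. -/
noncomputable def countOccs (u w : List A) : ℕ :=
  ((Finset.range (u.length + 1)).filter fun i => w <+: u.drop i).card

/-- The finite word `w` is `C`-balanced in the infinite word `x`. -/
def BalancedIn (C : ℝ) (w : List A) (x : ℕ → A) : Prop :=
  ∀ u v : List A, IsFactor x u → IsFactor x v → u.length = v.length →
    |(countOccs u w : ℝ) - (countOccs v w : ℝ)| ≤ C

/-- Every finite word is `C_w`-balanced in `x` for some constant `C_w > 0`. -/
def FactorBalanced (x : ℕ → A) : Prop :=
  ∀ w : List A, ∃ C : ℝ, 0 < C ∧ BalancedIn C w x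

/-- There is a single constant `C > 0` such that every finite word is `C`-balanced in `x`. -/
def UniformlyFactorBalanced (x : ℕ → A) : Prop :=
  ∃ C : ℝ, 0 < C ∧ ∀ w : List A, BalancedIn C w x

/-- Every letter is `C`-balanced in `x`. -/
def LetterBalanced (C : ℝ) (x : ℕ → A) : Prop :=
  ∀ a : A, BalancedIn C [a] x

/-- `x` is `P`-power-free: no factor of `x` is a `P`-th power of a nonempty word. -/
def PowerFree (P : ℕ) (x : ℕ → A) : Prop :=
  ∀ v : List A, v ≠ [] → ¬ IsFactor x (List.flatten (List.replicate P v))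

/-- The length-`n` prefix of the infinite word `x`. -/
def wordPrefix (x : ℕ → A) (n : ℕ) : List A := (List.range n).map x

/-- The extension of a substitution to finite words. -/
def substWord (τ : A → List B) (w : List A) : List B := (w.map τ).flatten

/-- The word `w` has (prefix) frequency `μ` in `x`. -/
def HasFreq (x : ℕ → A) (w : List A) (μ : ℝ) : Prop :=
  Filter.Tendsto (fun n => (countOccs (wordPrefix x n) w : ℝ) / n)
    Filter.atTop (nhds μ)

/-- `τ` is `k`-decisive in `x` with witness map `r` (each `r a` of length `k ≥ 1`,
and `τ b` starts with `r a` whenever `ab` is a factor of `x`). -/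
def DecisiveWith (τ : A → List B) (x : ℕ → A) (r : A → List B) (k : ℕ) : Prop :=
  1 ≤ k ∧ (∀ a, (r a).length = k) ∧
    ∀ a b : A, IsFactor x [a, b] → r a <+: τ b

/-- `τ` is `k`-decisive in `x`. -/
def Decisive (τ : A → List B) (x : ℕ → A) (k : ℕ) : Prop :=
  ∃ r : A → List B, DecisiveWith τ x r k

/-- The image of the infinite word `x` under the substitution `τ`: when the images of
prefixes of `x` have unbounded length, `substInf τ x` is the infinite word `τ(x)`. -/
noncomputable def substInf [Nonempty B] (τ : A → List B) (x : ℕ → A) (j : ℕ) : B :=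
  if h : ∃ n, j < (substWord τ (wordPrefix x n)).length
  then (substWord τ (wordPrefix x (Nat.find h))).get ⟨j, Nat.find_spec h⟩
  else Classical.arbitrary B

/-- Iterates of a substitution: `substIter τ n a = τ^n(a)` as a finite word. -/
def substIter (τ : A → List A) : ℕ → A → List A
  | 0, a => [a]
  | n+1, a => substWord (substIter τ n) (τ a)

/-- `τ` is prolongable on the letter `a`. -/
def Prolongable (τ : A → List A) (a : A) : Prop :=
  (τ a).head? = some a ∧ (∀ b, τ b ≠ []) ∧
    Filter.Tendsto (fun n => (substIter τ n a).length) Filter.atTop Filter.atTop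

/-- The fixed point `τ^ω(a)` of a substitution prolongable on `a`:
the limit of the prefix chain `τ^n(a)`. -/
noncomputable def fixedPoint (τ : A → List A) (a : A) (j : ℕ) : A :=
  if h : ∃ n, j < (substIter τ n a).length
  then (substIter τ (Nat.find h) a).get ⟨j, Nat.find_spec h⟩
  else a

/-- The factor complexity of `x`: the number of distinct length-`n` factors. -/
noncomputable def complexity (x : ℕ → A) (n : ℕ) : ℕ :=
  Set.ncard {w : List A | w.length = n ∧ IsFactor x w}

/-- Every factor of `x` occurs infinitely often in `x`. -/
def Recurrent (x : ℕ → A) : Prop :=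
  ∀ w : List A, IsFactor x w → ∀ N : ℕ, ∃ i, N ≤ i ∧ OccursAt x w i

/-- For every factor `w` of `x` there is `k` such that `w` occurs in
every length-`k` factor of `x`. -/
def UniformlyRecurrent (x : ℕ → A) : Prop :=
  ∀ w : List A, IsFactor x w → ∃ k : ℕ, ∀ v : List A, IsFactor x v →
    v.length = k → 1 ≤ countOccs v w

end Core


section AuxPf

variable {A : Type*}

lemma pf_occursAt_apply {x : ℕ → A} {w : List A} {i : ℕ} (h : OccursAt x w i)
    {j : ℕ} (hj : j < w.length) : w[j] = x (i + j) := by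
  have := List.getElem_of_eq h hj
  simpa using this

lemma pf_occursAt_of_forall {x : ℕ → A} {w : List A} {i : ℕ}
    (h : ∀ j (hj : j < w.length), w[j] = x (i + j)) : OccursAt x w i := by
  apply List.ext_getElem (by simp)
  intro j h1 h2
  simpa using h j h1

lemma pf_isFactor_window (x : ℕ → A) (t L : ℕ) :
    OccursAt x ((List.range L).map fun j => x (t + j)) t := by
  apply pf_occursAt_of_forall
  intro j hj
  simp at hj
  simp [hj]

lemma pf_occursAt_of_prefix {x : ℕ → A} {z u : List A} {t p : ℕ}
    (hz : OccursAt x z t) (hp : u <+: z.drop p) : OccursAt x u (t + p) := by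
  apply pf_occursAt_of_forall
  intro j hj
  have hlen : u.length ≤ z.length - p := by
    simpa using hp.length_le
  have hpj : p + j < z.length := by omega
  have e1 : u[j] = (z.drop p)[j]'(by simp; omega) := hp.getElem hj
  have e2 : (z.drop p)[j]'(by simp; omega) = z[p + j]'hpj := by
    simp [List.getElem_drop]
  rw [e1, e2, pf_occursAt_apply hz hpj, Nat.add_assoc]

lemma pf_flatten_replicate_length (v : List A) (n : ℕ) :
    ((List.replicate n v).flatten).length = n * v.length := by
  simp [List.length_flatten, List.map_replicate, List.sum_replicate, smul_eq_mul]

lemma pf_flatten_replicate_drop (v : List A) :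
    ∀ k n : ℕ, k ≤ n → ((List.replicate n v).flatten).drop (k * v.length)
      = (List.replicate (n - k) v).flatten := by
  intro k
  induction k with
  | zero => simp
  | succ k ih =>
    intro n hn
    obtain ⟨m, rfl⟩ : ∃ m, n = m + 1 := ⟨n - 1, by omega⟩
    have e : (k + 1) * v.length = v.length + k * v.length := by ring
    rw [e, ← List.drop_drop, List.replicate_succ, List.flatten_cons,
      List.drop_left, ih m (by omega)]
    congr 2
    omega

lemma pf_flatten_replicate_prefix (v : List A) {m n : ℕ} (h : m ≤ n) :
    (List.replicate m v).flatten <+: (List.replicate n v).flatten := by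
  have e : List.replicate n v = List.replicate m v ++ List.replicate (n - m) v := by
    rw [← List.replicate_add]; congr 1; omega
  rw [e, List.flatten_append]
  exact List.prefix_append _ _

lemma pf_flatten_replicate_period (v : List A) (n j : ℕ)
    (h1 : j < ((List.replicate n v).flatten).length)
    (h2 : j + v.length < ((List.replicate n v).flatten).length) :
    ((List.replicate n v).flatten)[j]'h1 =
      ((List.replicate n v).flatten)[j + v.length]'h2 := by
  cases n with
  | zero => simp at h1
  | succ m =>
    set w := (List.replicate m v).flatten with hw
    have e1 : (List.replicate (m + 1) v).flatten = w ++ v := by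
      rw [List.replicate_succ', List.flatten_append]; simp [hw]
    have e2 : (List.replicate (m + 1) v).flatten = v ++ w := by
      rw [List.replicate_succ, List.flatten_cons]
    have hlu : ((List.replicate (m + 1) v).flatten).length = v.length + w.length := by
      rw [e2]; simp
    have hjw : j < w.length := by omega
    have lhs : ((List.replicate (m + 1) v).flatten)[j]'h1 = w[j]'hjw := by
      rw [List.getElem_of_eq e1 h1]
      exact List.getElem_append_left hjw
    have rhs : ((List.replicate (m + 1) v).flatten)[j + v.length]'h2 = w[j]'hjw := by
      rw [List.getElem_of_eq e2 h2]
      rw [List.getElem_append_right (by omega)]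
      congr 1
      omega
    rw [lhs, rhs]

lemma pf_period_of_occurs {x : ℕ → A} {v : List A} {n p m : ℕ}
    (h : OccursAt x ((List.replicate n v).flatten) p)
    (h1 : p ≤ m) (h2 : m + v.length < p + ((List.replicate n v).flatten).length) :
    x (m + v.length) = x m := by
  set u := (List.replicate n v).flatten with hu
  have hb1 : m - p < u.length := by omega
  have hb2 : m - p + v.length < u.length := by omega
  have e1 : u[m - p]'hb1 = x m := by
    rw [pf_occursAt_apply h hb1]
    congr 1
    omega
  have e2 : u[m - p + v.length]'hb2 = x (m + v.length) := by
    rw [pf_occursAt_apply h hb2]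
    congr 1
    omega
  rw [← e1, ← e2, pf_flatten_replicate_period v n (m - p) hb1 hb2]

end AuxPf

/-- Corollary: an aperiodic recurrent word that is uniformly factor-balanced with
constant `C` is `(2C+3)`-power-free. -/
theorem stmt11 {A : Type*} [Fintype A] (x : ℕ → A) (hrec : Recurrent x)
    (hnp : ¬ ∃ p : ℕ, 1 ≤ p ∧ ∃ N : ℕ, ∀ n : ℕ, N ≤ n → x (n + p) = x n)
    (C : ℕ) (hC : 1 ≤ C) (hbal : ∀ w : List A, BalancedIn (C : ℝ) w x) :
    PowerFree (2 * C + 3) x := by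
  intro v hv hfac
  set q := v.length with hqdef
  have hq1 : 1 ≤ q := List.length_pos_iff.mpr hv
  obtain ⟨i0, hW⟩ := hfac
  set P := 2 * C + 3 with hP
  set W := (List.replicate P v).flatten with hWdef
  set u := (List.replicate (C + 2) v).flatten with hudef
  have hWlen : W.length = P * q := pf_flatten_replicate_length v P
  have hulen : u.length = (C + 2) * q := pf_flatten_replicate_length v (C + 2)
  have hWfac : IsFactor x W := ⟨i0, hW⟩
  -- Step A : W contains at least C+2 occurrences of u
  have hcount : C + 2 ≤ countOccs W u := by
    have hsub : (Finset.range (C + 2)).image (· * q) ⊆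
        (Finset.range (W.length + 1)).filter fun i => u <+: W.drop i := by
      intro i hi
      simp only [Finset.mem_image, Finset.mem_range] at hi
      obtain ⟨k, hk, rfl⟩ := hi
      have hkP : k ≤ P := by omega
      have hle : k * q ≤ P * q := Nat.mul_le_mul hkP (le_refl q)
      simp only [Finset.mem_filter, Finset.mem_range]
      refine ⟨by omega, ?_⟩
      rw [hWdef, pf_flatten_replicate_drop v k P hkP]
      exact pf_flatten_replicate_prefix v (by omega)
    have hcard : ((Finset.range (C + 2)).image (· * q)).card = C + 2 := by
      rw [Finset.card_image_of_injective _ fun a b hab =>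
        Nat.eq_of_mul_eq_mul_right hq1 hab]
      simp
    calc C + 2 = ((Finset.range (C + 2)).image (· * q)).card := hcard.symm
      _ ≤ _ := Finset.card_le_card hsub
  -- Step B/C : every window of length P*q contains two occurrences of u
  have key : ∀ t : ℕ, ∃ p1 p2 : ℕ, t ≤ p1 ∧ p1 < p2 ∧
      p2 + u.length ≤ t + P * q ∧ OccursAt x u p1 := by
    intro t
    set z := (List.range (P * q)).map (fun j => x (t + j)) with hzdef
    have hzocc : OccursAt x z t := pf_isFactor_window x t (P * q)
    have hzlen : z.length = P * q := by simp [hzdef]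
    have hzfac : IsFactor x z := ⟨t, hzocc⟩
    have hb := hbal u W z hWfac hzfac (by rw [hWlen, hzlen])
    have h2 : 2 ≤ countOccs z u := by
      have h1 : (C : ℝ) + 2 ≤ (countOccs W u : ℝ) := by exact_mod_cast hcount
      have habs := abs_le.mp hb
      have : (2 : ℝ) ≤ (countOccs z u : ℝ) := by linarith [habs.1, habs.2]
      exact_mod_cast this
    have hcard2 : 1 < countOccs z u := by omega
    unfold countOccs at hcard2
    obtain ⟨a, ha, b, hb', hab⟩ := Finset.one_lt_card.mp hcard2
    simp only [Finset.mem_filter, Finset.mem_range] at ha hb'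
    have hlen_of : ∀ c : ℕ, c ≤ z.length → (u <+: z.drop c) → c + u.length ≤ z.length := by
      intro c hcz hc
      have := hc.length_le
      simp at this
      omega
    rcases lt_or_gt_of_ne hab with hlt | hlt
    · exact ⟨t + a, t + b, by omega, by omega,
        by have := hlen_of b (by omega) hb'.2; omega, pf_occursAt_of_prefix hzocc ha.2⟩
    · exact ⟨t + b, t + a, by omega, by omega,
        by have := hlen_of a (by omega) ha.2; omega, pf_occursAt_of_prefix hzocc hb'.2⟩
  -- Conclude eventual periodicity, contradiction
  exfalso
  apply hnp
  refine ⟨q, hq1, (C + 1) * q, fun m hm => ?_⟩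
  set t := m + 1 - (C + 1) * q with htdef
  have ht : t + (C + 1) * q = m + 1 := by omega
  obtain ⟨p1, p2, hp1, hlt, hbound, hocc⟩ := key t
  rw [hulen] at hbound
  have e1 : P * q = (C + 2) * q + (C + 1) * q := by rw [hP]; ring
  have e2 : (C + 2) * q = (C + 1) * q + q := by ring
  have hple : p1 ≤ m := by
    have : p2 + (C + 2) * q ≤ t + P * q := hbound
    rw [e1] at this
    omega
  have hsmall : m + q < p1 + u.length := by
    rw [hulen, e2]
    omega
  exact pf_period_of_occurs hocc hple hsmall
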